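/- Let n = 2k and s be a positive integer with gcd(s, 2k) = 1. Let b be an element of F_{2^{2k}} that is not a cube (in particular b ≠ 0, 1), and set a = b(b+1)^{2^s + 2^{-s}} / (b + b^{2^{-s}})^{2^s+1}, where exponents 2^{-s} denote the inverse Frobenius (i.e., x^{2^{-s}} is the unique y with y^{2^s} = x). Then the polynomial P_a(x) = x^{2^s+1} + x + a has no roots in F_{2^{2k}}. -/

import Mathlib

/-- If `b` is a non-cube in `F_{2^{2k}}`, `gcd(s,2k)=1`, and
`a = b(b+1)^{2^s+2^{-s}} / (b+b^{2^{-s}})^{2^s+1}` (where `b'` denotes `b^{2^{-s}}`,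
the unique `y` with `y^{2^s} = b`), then `x^{2^s+1} + x + a` has no roots. -/
theorem stmt0 (F : Type*) [Field F] [Fintype F] (k s : ℕ) (hk : 0 < k) (hs : 0 < s)
    (hcard : Fintype.card F = 2 ^ (2 * k)) (hgcd : Nat.gcd s (2 * k) = 1)
    (b : F) (hb : ¬ ∃ c : F, c ^ 3 = b)
    (b' : F) (hb' : b' ^ 2 ^ s = b)
    (a : F)
    (ha : a = b * ((b + 1) ^ 2 ^ s * (b' + 1)) / (b + b') ^ (2 ^ s + 1)) :
    ∀ x : F, x ^ (2 ^ s + 1) + x + a ≠ 0 := by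
  -- characteristic 2
  obtain ⟨n, hp, hcardp⟩ := FiniteField.card F (ringChar F)
  have hpow : ringChar F ^ (n : ℕ) = 2 ^ (2 * k) := by rw [← hcardp, hcard]
  have hdvd : ringChar F ∣ 2 ^ (2 * k) := hpow ▸ dvd_pow_self _ n.pos.ne'
  have hr2 : ringChar F = 2 :=
    (Nat.prime_dvd_prime_iff_eq hp Nat.prime_two).mp (hp.dvd_of_dvd_pow hdvd)
  haveI hchar2 : CharP F 2 := hr2 ▸ ringChar.charP F
  haveI : Fact (Nat.Prime 2) := ⟨Nat.prime_two⟩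
  have htwo : (2 : F) = 0 := by
    have := CharP.cast_eq_zero F 2
    exact_mod_cast this
  have hq0 : (2 : ℕ) ^ s ≠ 0 := by positivity
  have frob : ∀ u v : F, (u + v) ^ (2 : ℕ) ^ s = u ^ (2 : ℕ) ^ s + v ^ (2 : ℕ) ^ s := by
    intro u v; rw [add_pow_char_pow]
  have hcardpow : ∀ u : F, u ^ (2 : ℕ) ^ (2 * k) = u := by
    intro u; rw [← hcard]; exact FiniteField.pow_card u
  -- fixed points of the s-th Frobenius power are 0 and 1
  have hfix : ∀ u : F, u ^ (2 : ℕ) ^ s = u → u = 0 ∨ u = 1 := by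
    intro u hu
    have hiter : ∀ m : ℕ, u ^ (2 : ℕ) ^ (s * m) = u := by
      intro m; induction m with
      | zero => simp
      | succ m ih =>
        have h1 : s * (m + 1) = s * m + s := by ring
        rw [h1, pow_add, pow_mul, ih, hu]
    have hiter2 : ∀ v : F, ∀ t : ℕ, v ^ (2 : ℕ) ^ (2 * k * t) = v := by
      intro v t; induction t with
      | zero => simp
      | succ t ih =>
        have h1 : 2 * k * (t + 1) = 2 * k * t + 2 * k := by ring
        rw [h1, pow_add, pow_mul, ih, hcardpow]
    obtain ⟨m, -, hm⟩ := Nat.exists_mul_mod_eq_one_of_coprime hgcd (by omega)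
    have hdm := Nat.div_add_mod (s * m) (2 * k)
    have hsm : s * m = 2 * k * (s * m / (2 * k)) + 1 := by omega
    have h1 := hiter m
    rw [hsm, pow_succ, pow_mul, hiter2 u _] at h1
    have h2 : u * (u + 1) = 0 := by linear_combination h1 + u * htwo
    rcases mul_eq_zero.mp h2 with h | h
    · exact Or.inl h
    · right; linear_combination h - htwo
  have hone : ∀ u : F, u ^ (2 : ℕ) ^ s = 1 → u = 1 := by
    intro u h
    have h0 : (u + 1) ^ (2 : ℕ) ^ s = 0 := by
      rw [frob, h, one_pow]; linear_combination htwo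
    have h1 : u + 1 = 0 := (pow_eq_zero_iff hq0).mp h0
    linear_combination h1 - htwo
  -- basic non-vanishing facts
  have hb0 : b ≠ 0 := fun h => hb ⟨0, by rw [h]; exact zero_pow (by norm_num)⟩
  have hb1 : b ≠ 1 := fun h => hb ⟨1, by rw [h]; exact one_pow 3⟩
  set B := b ^ (2 : ℕ) ^ s with hB
  have hBb : B + b ≠ 0 := by
    intro h
    have hfb : b ^ (2 : ℕ) ^ s = b := by rw [← hB]; linear_combination h - b * htwo
    rcases hfix b hfb with h0 | h1
    · exact hb0 h0
    · exact hb1 h1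
  have hd : b + b' ≠ 0 := by
    intro h
    have hbb : b' = b := by linear_combination h - b * htwo
    rw [hbb] at hb'
    rcases hfix b hb' with h0 | h1
    · exact hb0 h0
    · exact hb1 h1
  have hb1' : b + 1 ≠ 0 := by
    intro h; exact hb1 (by linear_combination h - htwo)
  have hbp1' : b' + 1 ≠ 0 := by
    intro h
    have hb'1 : b' = 1 := by linear_combination h - htwo
    apply hb1; rw [← hb', hb'1, one_pow]
  have hB1 : B + 1 ≠ 0 := by
    intro h
    have : b ^ (2 : ℕ) ^ s = 1 := by rw [← hB]; linear_combination h - htwo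
    exact hb1 (hone b this)
  -- rewrite `a`
  have hBdef2 : (b + 1) ^ (2 : ℕ) ^ s = B + 1 := by
    rw [hB]; simp only [frob, one_pow]
  have hdq : (b + b') ^ (2 : ℕ) ^ s = B + b := by
    rw [hB]; simp only [frob, hb']
  have hden : (b + b') ^ ((2 : ℕ) ^ s + 1) = (B + b) * (b + b') := by
    rw [pow_succ, hdq]
  rw [hBdef2, hden] at ha
  have hA : a * ((B + b) * (b + b')) = b * ((B + 1) * (b' + 1)) := by
    rw [ha, div_mul_cancel₀ _ (mul_ne_zero hBb hd)]
  -- the main argument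
  intro x hroot
  set y := x ^ (2 : ℕ) ^ s with hy
  have hE : y * x + x + a = 0 := by
    rw [hy, ← pow_succ]; exact hroot
  have hfd : ((b + b') * x + (b' + 1)) ^ (2 : ℕ) ^ s = (B + b) * y + (b + 1) := by
    rw [hB, hy]; simp only [frob, mul_pow, one_pow, hb']
  have hfn : ((b + b') * x + b * (b' + 1)) ^ (2 : ℕ) ^ s = (B + b) * y + B * (b + 1) := by
    rw [hB, hy]; simp only [frob, mul_pow, one_pow, hb']
  have hden1 : (b + b') * x + (b' + 1) ≠ 0 := by
    intro h1
    have h2 : (B + b) * y + (b + 1) = 0 := by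
      rw [← hfd, h1]; exact zero_pow hq0
    have hzero : (b' + 1) * ((b + 1) * (B + 1)) = 0 := by
      linear_combination ((b + b') * (B + b)) * hE - ((b + b') * x) * h2 - hA
        + (1 - B) * h1 + (B * (1 + b')) * htwo
    exact (mul_ne_zero hbp1' (mul_ne_zero hb1' hB1)) hzero
  have hden2 : (B + b) * y + (b + 1) ≠ 0 := by
    rw [← hfd]; exact pow_ne_zero _ hden1
  have key : ((b + b') * x + b * (b' + 1)) * ((B + b) * y + B * (b + 1)) =
      b * (((b + b') * x + (b' + 1)) * ((B + b) * y + (b + 1))) := by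
    linear_combination (b' * B + b * B + b * b' - b * b' * B + b ^ 2 - b ^ 2 * B
        - b ^ 2 * b' - b ^ 3) * hE + (b - 1) * hA
      + (-b - b * b' + b ^ 2 * B + b ^ 2 * b' * B - x * b * b' + x * b * b' * B
        - x * b ^ 2 + x * b ^ 2 * B) * htwo
  have htb : (((b + b') * x + b * (b' + 1)) / ((b + b') * x + (b' + 1))) ^ ((2 : ℕ) ^ s + 1)
      = b := by
    rw [pow_succ, div_pow, hfn, hfd, div_mul_div_comm,
      div_eq_iff (mul_ne_zero hden2 hden1)]
    linear_combination key
  -- 3 divides 2^s + 1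
  have hsodd : Odd s := by
    rcases Nat.even_or_odd s with he | ho
    · exfalso
      have h2s : 2 ∣ s := he.two_dvd
      have h2k : (2 : ℕ) ∣ 2 * k := ⟨k, rfl⟩
      have := Nat.dvd_gcd h2s h2k
      rw [hgcd] at this
      omega
    · exact ho
  obtain ⟨j, hj⟩ := hsodd
  have h3 : 3 ∣ 2 ^ s + 1 := by
    have haux : ∀ i : ℕ, 3 ∣ 2 ^ (2 * i + 1) + 1 := by
      intro i; induction i with
      | zero => decide
      | succ i ih =>
        have h4 : (2 : ℕ) ^ (2 * (i + 1) + 1) = 4 * 2 ^ (2 * i + 1) := by ring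
        omega
    rw [hj]; exact haux j
  obtain ⟨e, he⟩ := h3
  apply hb
  refine ⟨(((b + b') * x + b * (b' + 1)) / ((b + b') * x + (b' + 1))) ^ e, ?_⟩
  rw [← pow_mul, show e * 3 = 2 ^ s + 1 by omega]
  exact htb
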